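/- In the braid group B_{n+1}, for 1 ≤ j < n one has the identity U^j_1 · D^n_2 · σ_n = D^n_1 · σ_n · U^{j-1}_1, where U^j_i = σ_j σ_{j-1} ⋯ σ_i, D^j_i = σ_i σ_{i+1} ⋯ σ_j, and U^0_1 is interpreted as the identity element. -/

import Mathlib

section Aux

variable {G : Type*} [Group G]

lemma key_lemma (n : ℕ) (σ : ℕ → G)
    (hcomm : ∀ i j, 1 ≤ i → i + 2 ≤ j → j ≤ n → σ i * σ j = σ j * σ i)
    (hbraid : ∀ i, 1 ≤ i → i + 1 ≤ n →
      σ i * σ (i + 1) * σ i = σ (i + 1) * σ i * σ (i + 1))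
    (j : ℕ) (hj1 : 1 ≤ j) (hjn : j + 2 ≤ n) :
    σ (j + 1) * ((List.range' 1 n).map σ).prod * σ n
      = ((List.range' 1 n).map σ).prod * σ n * σ j := by
  have hsplit : List.range' 1 n
      = List.range' 1 (j - 1) ++ [j, j + 1] ++ List.range' (j + 2) (n - (j + 1)) := by
    have h2 : ([j, j + 1] : List ℕ) = List.range' j 2 := by simp [List.range']
    rw [h2]
    have h1 := List.range'_append (s := 1) (m := j - 1) (n := 2) (step := 1)
    have h3 := List.range'_append (s := 1) (m := j + 1) (n := n - (j + 1)) (step := 1)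
    rw [show 1 + 1 * (j - 1) = j by omega, show j - 1 + 2 = j + 1 by omega] at h1
    rw [show 1 + 1 * (j + 1) = j + 2 by omega, show j + 1 + (n - (j + 1)) = n by omega] at h3
    rw [h1, h3]
  set A := ((List.range' 1 (j - 1)).map σ).prod with hA
  set B := ((List.range' (j + 2) (n - (j + 1))).map σ).prod with hB
  have hprod : ((List.range' 1 n).map σ).prod = A * (σ j * σ (j + 1)) * B := by
    rw [hsplit]; simp [List.prod_append, mul_assoc]; rfl
  have cA : σ (j + 1) * A = A * σ (j + 1) := by
    refine (Commute.list_prod_right _ _ ?_)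
    intro x hx
    simp only [List.mem_map] at hx
    obtain ⟨i, hi, rfl⟩ := hx
    rw [List.mem_range'_1] at hi
    exact (hcomm i (j + 1) (by omega) (by omega) (by omega)).symm
  have cB : σ j * B = B * σ j := by
    refine (Commute.list_prod_right _ _ ?_)
    intro x hx
    simp only [List.mem_map] at hx
    obtain ⟨i, hi, rfl⟩ := hx
    rw [List.mem_range'_1] at hi
    exact (hcomm j i hj1 (by omega) (by omega))
  have cjn : σ j * σ n = σ n * σ j := hcomm j n hj1 hjn (le_refl n)
  have hb := hbraid j hj1 (by omega)
  rw [hprod]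
  calc σ (j + 1) * (A * (σ j * σ (j + 1)) * B) * σ n
      = A * (σ (j + 1) * σ j * σ (j + 1)) * B * σ n := by
        rw [← mul_assoc, ← mul_assoc, cA]; group
    _ = A * (σ j * σ (j + 1) * σ j) * B * σ n := by rw [← hb]
    _ = A * (σ j * σ (j + 1)) * (σ j * B) * σ n := by group
    _ = A * (σ j * σ (j + 1)) * B * (σ j * σ n) := by rw [cB]; group
    _ = A * (σ j * σ (j + 1)) * B * σ n * σ j := by rw [cjn]; group

end Aux

/-- In the braid group `B_{n+1}` (generators `σ_1, …, σ_n`), for `1 ≤ j < n` one has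
`U^j_1 · D^n_2 · σ_n = D^n_1 · σ_n · U^{j-1}_1`, where `U^j_i = σ_j σ_{j-1} ⋯ σ_i`,
`D^j_i = σ_i σ_{i+1} ⋯ σ_j`, and `U^0_1` is the identity element. -/
theorem stmt3 {G : Type*} [Group G] (n : ℕ) (σ : ℕ → G)
    (hcomm : ∀ i j, 1 ≤ i → i + 2 ≤ j → j ≤ n → σ i * σ j = σ j * σ i)
    (hbraid : ∀ i, 1 ≤ i → i + 1 ≤ n →
      σ i * σ (i + 1) * σ i = σ (i + 1) * σ i * σ (i + 1))
    (j : ℕ) (hj1 : 1 ≤ j) (hjn : j < n) :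
    (((List.range' 1 j).reverse).map σ).prod * ((List.range' 2 (n - 1)).map σ).prod * σ n
      = ((List.range' 1 n).map σ).prod * σ n * (((List.range' 1 (j - 1)).reverse).map σ).prod := by
  induction j with
  | zero => omega
  | succ k ih =>
    rcases Nat.eq_zero_or_pos k with hk | hk
    · subst hk
      simp only [List.range'_one, List.reverse_singleton, List.map_cons, List.map_nil,
        List.prod_cons, List.prod_nil, mul_one, Nat.sub_self, List.range'_zero,
        List.reverse_nil]
      have : List.range' 1 n = 1 :: List.range' 2 (n - 1) := by
        rw [show n = (n - 1) + 1 by omega, List.range'_succ]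
        norm_num
      rw [this]; simp [mul_assoc]
    · have ihh := ih hk (by omega)
      have hsplit : List.range' 1 (k + 1) = List.range' 1 k ++ [k + 1] := by
        have := List.range'_concat (step := 1) (s := 1) (n := k)
        rw [show 1 + 1 * k = k + 1 by omega] at this
        exact this
      rw [hsplit, List.reverse_append]
      simp only [List.reverse_singleton, List.singleton_append, List.map_cons, List.prod_cons]
      rw [mul_assoc (σ (k+1)), mul_assoc (σ (k+1)), ihh]
      have hkey := key_lemma n σ hcomm hbraid k hk (by omega)
      have hU : (((List.range' 1 (k + 1 - 1)).reverse).map σ).prod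
          = σ k * (((List.range' 1 (k - 1)).reverse).map σ).prod := by
        rw [Nat.add_sub_cancel, show List.range' 1 k = List.range' 1 (k - 1) ++ [k] by
          have := List.range'_concat (step := 1) (s := 1) (n := k - 1)
          rw [show 1 + 1 * (k - 1) = k by omega, show k - 1 + 1 = k by omega] at this
          exact this]
        simp
      rw [hU, ← mul_assoc, ← mul_assoc, ← mul_assoc, hkey]
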